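/- For a ≥ 1, the set Q^{a,u} := { Q equivalent to P : E_P[dQ/dP | F_t] ≤ a · E_P[dQ/dP | F_{t-1}] for all t = 1,...,T } is a consistent set of probability measures: for every t ∈ {0,...,T-1} and every random variable X, inf_{Q∈Q^{a,u}} E_Q[X | F_t] = inf_{Q∈Q^{a,u}} E_Q[ inf_{M∈Q^{a,u}} E_M[X | F_{t+1}] | F_t ]. -/
import Mathlib


open MeasureTheory
open scoped BigOperators ENNReal

/-- A probability mass function on the finite set `Ω`. -/
def IsProb {Ω : Type*} [Fintype Ω] (Q : Ω → ℝ) : Prop :=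
  (∀ ω, 0 ≤ Q ω) ∧ ∑ ω, Q ω = 1

/-- Full support (equivalence with a full-support reference measure). -/
def FullSupport {Ω : Type*} (Q : Ω → ℝ) : Prop := ∀ ω, 0 < Q ω

/-- The atom of the σ-algebra `𝒢` containing `ω`. -/
def atomOf {Ω : Type*} (𝒢 : MeasurableSpace Ω) (ω : Ω) : Set Ω :=
  ⋂₀ {A : Set Ω | MeasurableSet[𝒢] A ∧ ω ∈ A}

/-- Conditional expectation of `X` under `Q` given the σ-algebra `𝒢`, computed
pointwise on atoms (finite state space). -/
noncomputable def condExpOn {Ω : Type*} [Fintype Ω] (Q : Ω → ℝ)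
    (𝒢 : MeasurableSpace Ω) (X : Ω → ℝ) (ω : Ω) : ℝ :=
  (∑ ω', (atomOf 𝒢 ω).indicator (fun u => Q u * X u) ω') /
    (∑ ω', (atomOf 𝒢 ω).indicator Q ω')

/-- `inf_{Q ∈ 𝒬} E_Q[X | 𝒢]`, pointwise in `ω`. -/
noncomputable def infCE {Ω : Type*} [Fintype Ω] (𝒬 : Set (Ω → ℝ))
    (𝒢 : MeasurableSpace Ω) (X : Ω → ℝ) (ω : Ω) : ℝ :=
  sInf ((fun Q => condExpOn Q 𝒢 X ω) '' 𝒬)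

/-- A set of probability measures is consistent w.r.t. the filtration `F`. -/
def IsConsistent {Ω : Type*} [Fintype Ω] (T : ℕ) (F : ℕ → MeasurableSpace Ω)
    (𝒬 : Set (Ω → ℝ)) : Prop :=
  ∀ t, t < T → ∀ X : Ω → ℝ, ∀ ω : Ω,
    infCE 𝒬 (F t) X ω = infCE 𝒬 (F t) (infCE 𝒬 (F (t + 1)) X) ω

/-- A sequence of sets of probability measures is dynamically consistent
w.r.t. the filtration `F`. -/
def DynConsistent {Ω : Type*} [Fintype Ω] (T : ℕ) (F : ℕ → MeasurableSpace Ω)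
    (𝒬 : ℕ → Set (Ω → ℝ)) : Prop :=
  ∀ t, t < T → ∀ A : Set Ω, MeasurableSet[F t] A → A.Nonempty →
    ∀ X : Ω → ℝ, ∀ ω ∈ A,
      (⨅ ω' : A, infCE (𝒬 (t + 1)) (F (t + 1)) X (ω' : Ω)) ≤ infCE (𝒬 t) (F t) X ω ∧
      infCE (𝒬 t) (F t) X ω ≤ ⨆ ω' : A, infCE (𝒬 (t + 1)) (F (t + 1)) X (ω' : Ω)

/-- The set `P^e` of all full-support probability measures on `Ω`. -/
def fullSupportProbs (Ω : Type*) [Fintype Ω] : Set (Ω → ℝ) :=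
  {Q | IsProb Q ∧ FullSupport Q}

/-- The set `Q^{a,u}` of full-support probability measures whose density w.r.t.
the reference measure `P` satisfies
`E_P[dQ/dP | F_s] ≤ a · E_P[dQ/dP | F_{s-1}]` for `s = 1,...,T`. -/
def Qau {Ω : Type*} [Fintype Ω] (T : ℕ) (F : ℕ → MeasurableSpace Ω)
    (P : Ω → ℝ) (a : ℝ) : Set (Ω → ℝ) :=
  {Q | IsProb Q ∧ FullSupport Q ∧
    ∀ s : ℕ, 1 ≤ s → s ≤ T → ∀ ω : Ω,
      condExpOn P (F s) (fun u => Q u / P u) ω ≤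
        a * condExpOn P (F (s - 1)) (fun u => Q u / P u) ω}

section AtomLemmas
variable {Ω : Type*} [Fintype Ω]

lemma mem_atomOf (𝒢 : MeasurableSpace Ω) (ω : Ω) : ω ∈ atomOf 𝒢 ω :=
  fun _ hA => hA.2

lemma measurableSet_atomOf (𝒢 : MeasurableSpace Ω) (ω : Ω) :
    MeasurableSet[𝒢] (atomOf 𝒢 ω) :=
  MeasurableSet.sInter ((Set.toFinite _).countable) fun _ hA => hA.1

lemma atomOf_subset_of_measurableSet {𝒢 : MeasurableSpace Ω} {ω : Ω} {A : Set Ω}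
    (hA : MeasurableSet[𝒢] A) (hω : ω ∈ A) : atomOf 𝒢 ω ⊆ A :=
  Set.sInter_subset_of_mem ⟨hA, hω⟩

lemma atomOf_eq_of_mem {𝒢 : MeasurableSpace Ω} {ω ω' : Ω}
    (h : ω' ∈ atomOf 𝒢 ω) : atomOf 𝒢 ω' = atomOf 𝒢 ω := by
  have h1 : atomOf 𝒢 ω' ⊆ atomOf 𝒢 ω :=
    atomOf_subset_of_measurableSet (measurableSet_atomOf 𝒢 ω) h
  have h2 : ω ∈ atomOf 𝒢 ω' := by
    by_contra hc
    have hm : MeasurableSet[𝒢] (atomOf 𝒢 ω \ atomOf 𝒢 ω') :=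
      (measurableSet_atomOf 𝒢 ω).diff (measurableSet_atomOf 𝒢 ω')
    exact (atomOf_subset_of_measurableSet hm ⟨mem_atomOf 𝒢 ω, hc⟩ h).2
      (mem_atomOf 𝒢 ω')
  exact h1.antisymm (atomOf_subset_of_measurableSet (measurableSet_atomOf 𝒢 ω') h2)

lemma atomOf_mono {𝒢 ℋ : MeasurableSpace Ω} (h : 𝒢 ≤ ℋ) (ω : Ω) :
    atomOf ℋ ω ⊆ atomOf 𝒢 ω :=
  atomOf_subset_of_measurableSet (h _ (measurableSet_atomOf 𝒢 ω)) (mem_atomOf 𝒢 ω)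

open Classical in
noncomputable def atomF (𝒢 : MeasurableSpace Ω) (ω : Ω) : Finset Ω :=
  Finset.univ.filter (fun u => u ∈ atomOf 𝒢 ω)

lemma mem_atomF {𝒢 : MeasurableSpace Ω} {ω u : Ω} :
    u ∈ atomF 𝒢 ω ↔ u ∈ atomOf 𝒢 ω := by
  classical simp [atomF]

lemma atomF_eq_of_mem {𝒢 : MeasurableSpace Ω} {ω ω' : Ω}
    (h : ω' ∈ atomOf 𝒢 ω) : atomF 𝒢 ω' = atomF 𝒢 ω := by
  unfold atomF
  congr 1
  ext u
  rw [atomOf_eq_of_mem h]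

lemma condExpOn_eq (Q : Ω → ℝ) (𝒢 : MeasurableSpace Ω) (X : Ω → ℝ) (ω : Ω) :
    condExpOn Q 𝒢 X ω =
      (∑ u ∈ atomF 𝒢 ω, Q u * X u) / (∑ u ∈ atomF 𝒢 ω, Q u) := by
  classical
  unfold condExpOn atomF
  rw [Finset.sum_filter, Finset.sum_filter]
  congr 1 <;> exact Finset.sum_congr rfl fun u _ => by
    by_cases h : u ∈ atomOf 𝒢 ω <;> simp [Set.indicator_apply, h]

end AtomLemmas

set_option linter.unusedSectionVars false

section CELemmas
variable {Ω : Type*} [Fintype Ω] {𝒢 ℋ : MeasurableSpace Ω}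

lemma sum_atomF_pos {Q : Ω → ℝ} (hQ : FullSupport Q) (𝒢 : MeasurableSpace Ω) (ω : Ω) :
    0 < ∑ u ∈ atomF 𝒢 ω, Q u :=
  Finset.sum_pos (fun u _ => hQ u) ⟨ω, mem_atomF.2 (mem_atomOf 𝒢 ω)⟩

lemma condExpOn_atomConst (Q X : Ω → ℝ) {ω u : Ω} (hu : u ∈ atomOf 𝒢 ω) :
    condExpOn Q 𝒢 X u = condExpOn Q 𝒢 X ω := by
  unfold condExpOn
  rw [atomOf_eq_of_mem hu]

lemma condExpOn_mono {Q X Y : Ω → ℝ} (hQ : FullSupport Q) (h : ∀ u, X u ≤ Y u)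
    (ω : Ω) : condExpOn Q 𝒢 X ω ≤ condExpOn Q 𝒢 Y ω := by
  rw [condExpOn_eq, condExpOn_eq]
  have hc := sum_atomF_pos hQ 𝒢 ω
  apply div_le_div_of_nonneg_right ?_ hc.le |>.trans_eq rfl <;> try skip
  exact Finset.sum_le_sum fun u _ => mul_le_mul_of_nonneg_left (h u) (hQ u).le

lemma condExpOn_add_const {Q : Ω → ℝ} (hQ : FullSupport Q) (X : Ω → ℝ) (c : ℝ)
    (ω : Ω) : condExpOn Q 𝒢 (fun u => X u + c) ω = condExpOn Q 𝒢 X ω + c := by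
  rw [condExpOn_eq, condExpOn_eq]
  have hc := (sum_atomF_pos hQ 𝒢 ω).ne'
  rw [div_add' _ _ _ hc]
  congr 1
  rw [Finset.mul_sum, ← Finset.sum_add_distrib]
  exact Finset.sum_congr rfl fun u _ => by ring

lemma le_condExpOn {Q X : Ω → ℝ} {b : ℝ} (hQ : FullSupport Q) (h : ∀ u, b ≤ X u)
    (ω : Ω) : b ≤ condExpOn Q 𝒢 X ω := by
  rw [condExpOn_eq, le_div_iff₀ (sum_atomF_pos hQ 𝒢 ω)]
  calc b * ∑ u ∈ atomF 𝒢 ω, Q u = ∑ u ∈ atomF 𝒢 ω, Q u * b := by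
        rw [Finset.mul_sum]; exact Finset.sum_congr rfl fun u _ => mul_comm _ _
    _ ≤ ∑ u ∈ atomF 𝒢 ω, Q u * X u :=
        Finset.sum_le_sum fun u _ => mul_le_mul_of_nonneg_left (h u) (hQ u).le

lemma condExpOn_const {Q : Ω → ℝ} (hQ : FullSupport Q) (c : ℝ) (ω : Ω) :
    condExpOn Q 𝒢 (fun _ => c) ω = c := by
  rw [condExpOn_eq]
  have hc := (sum_atomF_pos hQ 𝒢 ω).ne'
  rw [← Finset.sum_mul, mul_comm, mul_div_assoc, div_self hc, mul_one]

lemma condExpOn_density {P Q : Ω → ℝ} (hPfs : FullSupport P) (𝒢 : MeasurableSpace Ω)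
    (ω : Ω) : condExpOn P 𝒢 (fun u => Q u / P u) ω =
      (∑ u ∈ atomF 𝒢 ω, Q u) / (∑ u ∈ atomF 𝒢 ω, P u) := by
  rw [condExpOn_eq]
  congr 1
  exact Finset.sum_congr rfl fun u _ => by
    rw [mul_comm, div_mul_cancel₀ _ (hPfs u).ne']

/-- Master grouping lemma: if `p` and `h` have the same sums over every
`ℋ`-atom and `S` is a union of `ℋ`-atoms, then their sums over `S` agree. -/
lemma sum_eq_of_atom_sums {h p : Ω → ℝ}
    (hp : ∀ u : Ω, ∑ v ∈ atomF ℋ u, p v = ∑ v ∈ atomF ℋ u, h v) :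
    ∀ S : Finset Ω, (∀ u ∈ S, ∀ v ∈ atomOf ℋ u, v ∈ S) →
      ∑ u ∈ S, p u = ∑ u ∈ S, h u := by
  classical
  intro S
  induction S using Finset.strongInduction with
  | _ S ih =>
    intro hS
    rcases S.eq_empty_or_nonempty with rfl | ⟨u, hu⟩
    · simp
    · have hsub : atomF ℋ u ⊆ S := fun v hv => hS u hu v (mem_atomF.1 hv)
      have hne : (atomF ℋ u).Nonempty := ⟨u, mem_atomF.2 (mem_atomOf ℋ u)⟩
      have hss : S \ atomF ℋ u ⊂ S := Finset.sdiff_ssubset hsub hne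
      have hclosed : ∀ w ∈ S \ atomF ℋ u, ∀ v ∈ atomOf ℋ w, v ∈ S \ atomF ℋ u := by
        intro w hw v hv
        rw [Finset.mem_sdiff] at hw ⊢
        refine ⟨hS w hw.1 v hv, fun hvB => ?_⟩
        have h1 : atomOf ℋ v = atomOf ℋ w := atomOf_eq_of_mem hv
        have h2 : atomOf ℋ v = atomOf ℋ u := atomOf_eq_of_mem (mem_atomF.1 hvB)
        exact hw.2 (mem_atomF.2 (h2 ▸ h1.symm ▸ mem_atomOf ℋ w))
      rw [← Finset.sum_sdiff hsub, ← Finset.sum_sdiff hsub, hp u,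
        ih _ hss hclosed]

end CELemmas

section TowerPaste
variable {Ω : Type*} [Fintype Ω] {𝒢 ℋ : MeasurableSpace Ω}

lemma atomF_closed (hle : 𝒢 ≤ ℋ) (ω : Ω) :
    ∀ u ∈ atomF 𝒢 ω, ∀ v ∈ atomOf ℋ u, v ∈ atomF 𝒢 ω := by
  intro u hu v hv
  have h1 : v ∈ atomOf 𝒢 u := atomOf_mono hle u hv
  exact mem_atomF.2 (atomOf_eq_of_mem (mem_atomF.1 hu) ▸ h1)

lemma condExpOn_tower {Q : Ω → ℝ} (hQ : FullSupport Q) (hle : 𝒢 ≤ ℋ)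
    (X : Ω → ℝ) (ω : Ω) :
    condExpOn Q 𝒢 (condExpOn Q ℋ X) ω = condExpOn Q 𝒢 X ω := by
  rw [condExpOn_eq, condExpOn_eq]
  congr 1
  refine sum_eq_of_atom_sums (ℋ := ℋ) ?_ _ (atomF_closed hle ω)
  intro u
  have hconst : ∀ v ∈ atomF ℋ u, Q v * condExpOn Q ℋ X v
      = Q v * condExpOn Q ℋ X u := fun v hv => by
    rw [condExpOn_atomConst Q X (mem_atomF.1 hv)]
  rw [Finset.sum_congr rfl hconst, ← Finset.sum_mul, condExpOn_eq,
    mul_div_cancel₀ _ (sum_atomF_pos hQ ℋ u).ne']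

lemma infCE_atomConst (𝒬 : Set (Ω → ℝ)) (X : Ω → ℝ) {ω u : Ω}
    (hu : u ∈ atomOf 𝒢 ω) : infCE 𝒬 𝒢 X u = infCE 𝒬 𝒢 X ω := by
  unfold infCE
  exact congrArg sInf (Set.image_congr fun Q _ => condExpOn_atomConst Q X hu)

noncomputable def repAtom (ℋ : MeasurableSpace Ω) (u : Ω) : Ω :=
  (⟨u, mem_atomOf ℋ u⟩ : ∃ v, v ∈ atomOf ℋ u).choose

lemma repAtom_mem (ℋ : MeasurableSpace Ω) (u : Ω) : repAtom ℋ u ∈ atomOf ℋ u :=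
  Exists.choose_spec _

private lemma choose_congr' {s t : Set Ω} (h : s = t) (hs : ∃ x, x ∈ s)
    (ht : ∃ x, x ∈ t) : hs.choose = ht.choose := by subst h; rfl

lemma repAtom_eq {u v : Ω} (h : v ∈ atomOf ℋ u) : repAtom ℋ v = repAtom ℋ u :=
  choose_congr' (atomOf_eq_of_mem h) _ _

/-- The measure pasted from `Q` (up to `ℋ`) and the kernel family `M`
(after `ℋ`). -/
noncomputable def paste (ℋ : MeasurableSpace Ω) (Q : Ω → ℝ) (M : Ω → Ω → ℝ)
    (u : Ω) : ℝ :=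
  (∑ v ∈ atomF ℋ u, Q v) * M u u / (∑ v ∈ atomF ℋ u, M u v)

lemma paste_pos {Q : Ω → ℝ} {M : Ω → Ω → ℝ} (hQ : FullSupport Q)
    (hM : ∀ u, FullSupport (M u)) (u : Ω) : 0 < paste ℋ Q M u :=
  div_pos (mul_pos (sum_atomF_pos hQ ℋ u) (hM u u)) (sum_atomF_pos (hM u) ℋ u)

lemma paste_sum {Q : Ω → ℝ} {M : Ω → Ω → ℝ}
    (hMc : ∀ u v, v ∈ atomOf ℋ u → M v = M u)
    (hMfs : ∀ u, FullSupport (M u))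
    (S : Finset Ω) (hS : ∀ u ∈ S, ∀ v ∈ atomOf ℋ u, v ∈ S) :
    ∑ u ∈ S, paste ℋ Q M u = ∑ u ∈ S, Q u := by
  refine sum_eq_of_atom_sums (ℋ := ℋ) ?_ S hS
  intro u
  have hterm : ∀ v ∈ atomF ℋ u, paste ℋ Q M v
      = (∑ w ∈ atomF ℋ u, Q w) * M u v / (∑ w ∈ atomF ℋ u, M u w) := by
    intro v hv
    rw [paste, atomF_eq_of_mem (mem_atomF.1 hv), hMc u v (mem_atomF.1 hv)]
  rw [Finset.sum_congr rfl hterm]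
  have hden := (sum_atomF_pos (hMfs u) ℋ u).ne'
  rw [← Finset.sum_div, ← Finset.mul_sum, mul_div_assoc, div_self hden, mul_one]

lemma paste_sum_fine {𝒦 : MeasurableSpace Ω} (hle : ℋ ≤ 𝒦) {Q : Ω → ℝ}
    {M : Ω → Ω → ℝ} (hMc : ∀ u v, v ∈ atomOf ℋ u → M v = M u) (ω : Ω) :
    ∑ u ∈ atomF 𝒦 ω, paste ℋ Q M u =
      ((∑ v ∈ atomF ℋ ω, Q v) / (∑ v ∈ atomF ℋ ω, M ω v)) *
        ∑ u ∈ atomF 𝒦 ω, M ω u := by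
  rw [Finset.mul_sum]
  refine Finset.sum_congr rfl fun u hu => ?_
  have h1 : u ∈ atomOf ℋ ω := atomOf_mono hle ω (mem_atomF.1 hu)
  rw [paste, atomF_eq_of_mem h1, hMc ω u h1]
  ring

lemma paste_sum_X {Q X : Ω → ℝ} {M : Ω → Ω → ℝ}
    (hMc : ∀ u v, v ∈ atomOf ℋ u → M v = M u)
    (hMfs : ∀ u, FullSupport (M u))
    (S : Finset Ω) (hS : ∀ u ∈ S, ∀ v ∈ atomOf ℋ u, v ∈ S) :
    ∑ u ∈ S, paste ℋ Q M u * X u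
      = ∑ u ∈ S, Q u * condExpOn (M u) ℋ X u := by
  refine sum_eq_of_atom_sums (ℋ := ℋ) ?_ S hS
  intro u
  have hden := (sum_atomF_pos (hMfs u) ℋ u).ne'
  have hZ : ∀ v ∈ atomF ℋ u, condExpOn (M v) ℋ X v = condExpOn (M u) ℋ X u := by
    intro v hv
    rw [hMc u v (mem_atomF.1 hv), condExpOn_atomConst (M u) X (mem_atomF.1 hv)]
  have hterm : ∀ v ∈ atomF ℋ u, paste ℋ Q M v * X v
      = (∑ w ∈ atomF ℋ u, Q w) / (∑ w ∈ atomF ℋ u, M u w) * (M u v * X v) := by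
    intro v hv
    rw [paste, atomF_eq_of_mem (mem_atomF.1 hv), hMc u v (mem_atomF.1 hv)]
    ring
  have hterm2 : ∀ v ∈ atomF ℋ u, Q v * condExpOn (M v) ℋ X v
      = Q v * condExpOn (M u) ℋ X u := fun v hv => by rw [hZ v hv]
  rw [Finset.sum_congr rfl hterm, Finset.sum_congr rfl hterm2,
    ← Finset.mul_sum, ← Finset.sum_mul, condExpOn_eq]
  ring

end TowerPaste

/-- For `a ≥ 1`, the set `Q^{a,u}` is a consistent set of
probability measures. -/
theorem Qau_consistent {Ω : Type*} [Fintype Ω] (T : ℕ)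
    (F : ℕ → MeasurableSpace Ω) (hF : Monotone F)
    (P : Ω → ℝ) (hP : IsProb P) (hPfs : FullSupport P)
    (a : ℝ) (ha : 1 ≤ a) :
    IsConsistent T F (Qau T F P a) := by
  classical
  intro t ht X ω
  have hle : F t ≤ F (t + 1) := hF (Nat.le_succ t)
  set 𝒬 := Qau T F P a with h𝒬def
  have hfs : ∀ Q ∈ 𝒬, FullSupport Q := fun Q hQ => hQ.2.1
  have hPone : (fun u => P u / P u) = fun _ => (1 : ℝ) :=
    funext fun u => div_self (hPfs u).ne'
  have hPmem : P ∈ 𝒬 := by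
    refine ⟨hP, hPfs, fun s hs1 hsT ω' => ?_⟩
    rw [hPone, condExpOn_const hPfs, condExpOn_const hPfs]
    linarith
  have h𝒬ne : 𝒬.Nonempty := ⟨P, hPmem⟩
  obtain ⟨b, hb⟩ : ∃ b, ∀ u, b ≤ X u := by
    have : Nonempty Ω := ⟨ω⟩
    exact ⟨Finset.univ.inf' Finset.univ_nonempty X,
      fun u => Finset.inf'_le X (Finset.mem_univ u)⟩
  set Y := infCE 𝒬 (F (t + 1)) X with hYdef
  have hbY : ∀ u, b ≤ Y u := fun u =>
    le_csInf (h𝒬ne.image _)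
      (by rintro x ⟨Q, hQ, rfl⟩; exact le_condExpOn (hfs Q hQ) hb u)
  have hbdd : ∀ (𝒢' : MeasurableSpace Ω) (W : Ω → ℝ) (b' : ℝ), (∀ u, b' ≤ W u) →
      ∀ u, BddBelow ((fun Q => condExpOn Q 𝒢' W u) '' 𝒬) := by
    intro 𝒢' W b' hb' u
    exact ⟨b', by rintro x ⟨Q, hQ, rfl⟩; exact le_condExpOn (hfs Q hQ) hb' u⟩
  show infCE 𝒬 (F t) X ω = infCE 𝒬 (F t) Y ω
  apply le_antisymm
  · -- hard direction: pasting
    refine le_of_forall_pos_le_add fun ε hε => ?_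
    have hlt : infCE 𝒬 (F t) Y ω < infCE 𝒬 (F t) Y ω + ε / 2 := by linarith
    obtain ⟨x, ⟨Q, hQ, rfl⟩, hxlt⟩ := exists_lt_of_csInf_lt (h𝒬ne.image _) hlt
    have hQfs := hfs Q hQ
    have hMex : ∀ u : Ω, ∃ m, m ∈ 𝒬 ∧
        condExpOn m (F (t + 1)) X u < Y u + ε / 2 := by
      intro u
      have hYu : Y u < Y u + ε / 2 := by linarith
      obtain ⟨x, ⟨m, hm, rfl⟩, hx⟩ := exists_lt_of_csInf_lt (h𝒬ne.image _) hYu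
      exact ⟨m, hm, hx⟩
    choose M0 hM0mem hM0lt using hMex
    set M : Ω → Ω → ℝ := fun u => M0 (repAtom (F (t + 1)) u) with hMdef
    have hMc : ∀ u v, v ∈ atomOf (F (t + 1)) u → M v = M u := by
      intro u v hv
      show M0 (repAtom (F (t + 1)) v) = M0 (repAtom (F (t + 1)) u)
      rw [repAtom_eq hv]
    have hMmem : ∀ u, M u ∈ 𝒬 := fun u => hM0mem _
    have hMfs : ∀ u, FullSupport (M u) := fun u => hfs _ (hMmem u)
    set R := paste (F (t + 1)) Q M with hRdef
    set Z : Ω → ℝ := fun u => condExpOn (M u) (F (t + 1)) X u with hZdef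
    have hZlt : ∀ u, Z u ≤ Y u + ε / 2 := by
      intro u
      have hr := repAtom_mem (F (t + 1)) u
      have e1 : condExpOn (M u) (F (t + 1)) X (repAtom (F (t + 1)) u)
          = condExpOn (M u) (F (t + 1)) X u := condExpOn_atomConst _ X hr
      have e2 : Y (repAtom (F (t + 1)) u) = Y u := infCE_atomConst 𝒬 X hr
      have := hM0lt (repAtom (F (t + 1)) u)
      show condExpOn (M u) (F (t + 1)) X u ≤ Y u + ε / 2
      rw [← e1, ← e2]
      exact this.le
    have hRfs : FullSupport R := fun u => paste_pos hQfs hMfs u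
    have hRsum : ∑ u, R u = 1 := by
      have := paste_sum (ℋ := F (t + 1)) (Q := Q) hMc hMfs Finset.univ
        (fun u _ v _ => Finset.mem_univ v)
      exact this.trans hQ.1.2
    have hRmem : R ∈ 𝒬 := by
      refine ⟨⟨fun u => (hRfs u).le, hRsum⟩, hRfs, ?_⟩
      intro s hs1 hsT ω'
      rw [condExpOn_density hPfs, condExpOn_density hPfs]
      by_cases hcase : s ≤ t + 1
      · have e1 : ∑ u ∈ atomF (F s) ω', R u = ∑ u ∈ atomF (F s) ω', Q u :=
          paste_sum hMc hMfs _ (atomF_closed (hF hcase) ω')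
        have e2 : ∑ u ∈ atomF (F (s - 1)) ω', R u
            = ∑ u ∈ atomF (F (s - 1)) ω', Q u :=
          paste_sum hMc hMfs _ (atomF_closed (hF ((Nat.sub_le s 1).trans hcase)) ω')
        rw [e1, e2]
        have hQc := hQ.2.2 s hs1 hsT ω'
        rwa [condExpOn_density hPfs, condExpOn_density hPfs] at hQc
      · push_neg at hcase
        have hs' : F (t + 1) ≤ F s := hF hcase.le
        have hs'' : F (t + 1) ≤ F (s - 1) := hF (by omega)
        have e1 := paste_sum_fine (Q := Q) hs' hMc ω'
        have e2 := paste_sum_fine (Q := Q) hs'' hMc ω'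
        rw [e1, e2]
        set c := (∑ v ∈ atomF (F (t + 1)) ω', Q v) /
          (∑ v ∈ atomF (F (t + 1)) ω', M ω' v) with hc
        have hcpos : 0 < c :=
          div_pos (sum_atomF_pos hQfs _ ω') (sum_atomF_pos (hMfs ω') _ ω')
        have hm := (hMmem ω').2.2 s hs1 hsT ω'
        rw [condExpOn_density hPfs, condExpOn_density hPfs] at hm
        calc c * (∑ u ∈ atomF (F s) ω', M ω' u) / (∑ u ∈ atomF (F s) ω', P u)
            = c * ((∑ u ∈ atomF (F s) ω', M ω' u) /
                (∑ u ∈ atomF (F s) ω', P u)) := by ring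
          _ ≤ c * (a * ((∑ u ∈ atomF (F (s - 1)) ω', M ω' u) /
                (∑ u ∈ atomF (F (s - 1)) ω', P u))) :=
              mul_le_mul_of_nonneg_left hm hcpos.le
          _ = a * (c * (∑ u ∈ atomF (F (s - 1)) ω', M ω' u) /
                (∑ u ∈ atomF (F (s - 1)) ω', P u)) := by ring
    have hRX : condExpOn R (F t) X ω = condExpOn Q (F t) Z ω := by
      rw [condExpOn_eq, condExpOn_eq,
        paste_sum_X hMc hMfs _ (atomF_closed hle ω),
        paste_sum hMc hMfs _ (atomF_closed hle ω)]
    have hfinal : infCE 𝒬 (F t) X ω ≤ condExpOn R (F t) X ω :=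
      csInf_le (hbdd _ X b hb ω) ⟨R, hRmem, rfl⟩
    have step2 : condExpOn Q (F t) Z ω ≤
        condExpOn Q (F t) (fun u => Y u + ε / 2) ω :=
      condExpOn_mono hQfs hZlt ω
    rw [condExpOn_add_const hQfs] at step2
    linarith [hRX ▸ hfinal]
  · refine le_csInf (h𝒬ne.image _) ?_
    rintro x ⟨Q, hQ, rfl⟩
    have h1 : infCE 𝒬 (F t) Y ω ≤ condExpOn Q (F t) Y ω :=
      csInf_le (hbdd _ Y b hbY ω) ⟨Q, hQ, rfl⟩
    have h2 : ∀ u, Y u ≤ condExpOn Q (F (t + 1)) X u := fun u =>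
      csInf_le (hbdd _ X b hb u) ⟨Q, hQ, rfl⟩
    calc infCE 𝒬 (F t) Y ω ≤ condExpOn Q (F t) Y ω := h1
      _ ≤ condExpOn Q (F t) (condExpOn Q (F (t + 1)) X) ω :=
          condExpOn_mono (hfs Q hQ) h2 ω
      _ = condExpOn Q (F t) X ω := condExpOn_tower (hfs Q hQ) hle X ω
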